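/- For every ε > 0 and every v ∈ ℝ² with |v| > 2ε, the quantity c_ε(v) := (1/(8π²)) ∬_{B₁(0)×B₁(0)} log(|v+ε(z−z′)|/|v|) dz dz′ satisfies |c_ε(v)| ≤ ε/(4(|v| − 2ε)). -/

import Mathlib

open MeasureTheory Real

/-- For every `ε > 0` and `v ∈ ℝ²` with `|v| > 2ε`, the quantity
`c_ε(v) = (1/(8π²)) ∬_{B₁(0)×B₁(0)} log(|v+ε(z−z′)|/|v|) dz dz′`
satisfies `|c_ε(v)| ≤ ε/(4(|v| − 2ε))`. -/
theorem stmt6 (ε : ℝ) (hε : 0 < ε) (v : EuclideanSpace ℝ (Fin 2))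
    (hv : 2 * ε < ‖v‖) :
    |(1 / (8 * π ^ 2)) *
        ∫ z in Metric.closedBall (0 : EuclideanSpace ℝ (Fin 2)) 1,
          ∫ z' in Metric.closedBall (0 : EuclideanSpace ℝ (Fin 2)) 1,
            Real.log (‖v + ε • (z - z')‖ / ‖v‖)|
      ≤ ε / (4 * (‖v‖ - 2 * ε)) := by
  have hvpos : (0:ℝ) < ‖v‖ := lt_trans (by positivity) hv
  have hsub : (0:ℝ) < ‖v‖ - 2 * ε := by linarith
  set B := Metric.closedBall (0 : EuclideanSpace ℝ (Fin 2)) 1 with hB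
  set C : ℝ := Real.log (‖v‖ / (‖v‖ - 2 * ε)) with hC
  have hCnonneg : 0 ≤ C := Real.log_nonneg (by
    rw [le_div_iff₀ hsub]; linarith)
  -- pointwise bound
  have hpt : ∀ z ∈ B, ∀ z' ∈ B, |Real.log (‖v + ε • (z - z')‖ / ‖v‖)| ≤ C := by
    intro z hz z' hz'
    rw [hB] at hz hz'
    have hz1 : ‖z‖ ≤ 1 := by simpa using mem_closedBall_zero_iff.mp hz
    have hz'1 : ‖z'‖ ≤ 1 := by simpa using mem_closedBall_zero_iff.mp hz'
    have hd : ‖ε • (z - z')‖ ≤ 2 * ε := by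
      rw [norm_smul, Real.norm_eq_abs, abs_of_pos hε]
      have h2 : ‖z - z'‖ ≤ 2 := by
        calc ‖z - z'‖ ≤ ‖z‖ + ‖z'‖ := norm_sub_le _ _
          _ ≤ 2 := by linarith
      nlinarith
    have hlo : ‖v‖ - 2 * ε ≤ ‖v + ε • (z - z')‖ := by
      have := norm_sub_norm_le v (-(ε • (z - z')))
      simp only [norm_neg, sub_neg_eq_add] at this
      linarith
    have hhi : ‖v + ε • (z - z')‖ ≤ ‖v‖ + 2 * ε := by
      have := norm_add_le v (ε • (z - z'))
      linarith
    have hwpos : (0:ℝ) < ‖v + ε • (z - z')‖ := lt_of_lt_of_le hsub hlo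
    rw [abs_le]
    constructor
    · have hnegC : -C = Real.log ((‖v‖ - 2 * ε) / ‖v‖) := by
        rw [hC, ← Real.log_inv, inv_div]
      rw [hnegC]
      apply Real.log_le_log (by positivity)
      gcongr
    · apply Real.log_le_log (by positivity)
      rw [div_le_div_iff₀ hvpos hsub]
      nlinarith
  -- measure of the ball
  have hmeas : MeasurableSet B := Metric.isClosed_closedBall.measurableSet
  have hfin : volume B < ⊤ := measure_closedBall_lt_top
  have hvol : (volume B).toReal = π := by
    rw [hB, EuclideanSpace.volume_closedBall]
    simp only [Fintype.card_fin]
    rw [Real.Gamma_add_one (by norm_num)]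
    norm_num [Real.Gamma_one, Real.sq_sqrt Real.pi_pos.le,
      ENNReal.toReal_ofReal Real.pi_pos.le]
  -- inner integral bound
  have hinner : ∀ z ∈ B,
      ‖∫ z' in B, Real.log (‖v + ε • (z - z')‖ / ‖v‖)‖ ≤ C * π := by
    intro z hz
    have := norm_setIntegral_le_of_norm_le_const_ae' (μ := volume)
      (f := fun z' => Real.log (‖v + ε • (z - z')‖ / ‖v‖)) hfin
      (Filter.Eventually.of_forall fun z' hz' => by
        rw [Real.norm_eq_abs]; exact hpt z hz z' hz')
    rwa [measureReal_def, hvol] at this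
  have houter :
      ‖∫ z in B, ∫ z' in B, Real.log (‖v + ε • (z - z')‖ / ‖v‖)‖ ≤ C * π * π := by
    have := norm_setIntegral_le_of_norm_le_const_ae' (μ := volume)
      (f := fun z => ∫ z' in B, Real.log (‖v + ε • (z - z')‖ / ‖v‖)) hfin
      (Filter.Eventually.of_forall hinner)
    rwa [measureReal_def, hvol] at this
  -- constant bound: C ≤ 2ε/(‖v‖ - 2ε)
  have hClog : C ≤ 2 * ε / (‖v‖ - 2 * ε) := by
    have := Real.log_le_sub_one_of_pos (x := ‖v‖ / (‖v‖ - 2 * ε)) (by positivity)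
    rw [hC]
    have heq : ‖v‖ / (‖v‖ - 2 * ε) - 1 = 2 * ε / (‖v‖ - 2 * ε) := by
      field_simp; ring
    linarith [this, heq ▸ this]
  -- final computation
  rw [abs_mul]
  have hπ : (0:ℝ) < π := Real.pi_pos
  have h8 : |1 / (8 * π ^ 2)| = 1 / (8 * π ^ 2) := abs_of_pos (by positivity)
  rw [h8]
  calc 1 / (8 * π ^ 2) * |∫ z in B, ∫ z' in B, Real.log (‖v + ε • (z - z')‖ / ‖v‖)|
      ≤ 1 / (8 * π ^ 2) * (C * π * π) := by
        apply mul_le_mul_of_nonneg_left _ (by positivity)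
        rw [← Real.norm_eq_abs]; exact houter
    _ = C / 8 := by field_simp
    _ ≤ (2 * ε / (‖v‖ - 2 * ε)) / 8 := by linarith
    _ = ε / (4 * (‖v‖ - 2 * ε)) := by field_simp; ring
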